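/- For n ≥ 2, the cardinality-based map d : Xⁿ → ℝ≥0 defined by d(x₁,…,xₙ) = |{x₁,…,xₙ}| − 1 is an n-distance on X and satisfies d(x₁,…,xₙ) ≤ (1/(n-1))·∑_{i=1}^n d(x₁,…,xₙ)ᵢᶻ for all x₁,…,xₙ,z ∈ X, with equality attained when x₁ ≠ x₂ = ⋯ = xₙ = z. -/

import Mathlib

open Finset Function

/-- `d` is an `n`-distance: nonnegative, vanishing exactly on constant tuples,
symmetric, and satisfying the simplex inequality. -/
structure IsNDistance {X : Type*} {n : ℕ} (d : (Fin n → X) → ℝ) : Prop where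
  nonneg : ∀ x, 0 ≤ d x
  eq_zero_iff : ∀ x, d x = 0 ↔ ∀ i j : Fin n, x i = x j
  symm : ∀ (x : Fin n → X) (σ : Equiv.Perm (Fin n)), d (x ∘ σ) = d x
  simplex : ∀ (x : Fin n → X) (z : X), d x ≤ ∑ i, d (Function.update x i z)

section CardAux

variable {X : Type*} [DecidableEq X] {n : ℕ}


lemma card_le_update (x : Fin n → X) (i : Fin n) (z : X) :
    (univ.image x).card ≤ (univ.image (update x i z)).card + 1 := by
  have h : univ.image x ⊆ insert (x i) (univ.image (update x i z)) := by
    intro v hv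
    obtain ⟨j, -, rfl⟩ := mem_image.1 hv
    by_cases hj : j = i
    · subst hj; exact mem_insert_self _ _
    · exact mem_insert_of_mem (mem_image.2 ⟨j, mem_univ _, by simp [update_of_ne hj]⟩)
  calc (univ.image x).card ≤ _ := card_le_card h
    _ ≤ _ := card_insert_le _ _

lemma bad_mem (x : Fin n → X) (i : Fin n) (z : X)
    (h : (univ.image (update x i z)).card < (univ.image x).card) :
    z ∈ (univ.image x).erase (x i) := by
  by_contra hz
  have hxi : x i ∈ univ.image x := mem_image.2 ⟨i, mem_univ _, rfl⟩
  have hsub : insert z ((univ.image x).erase (x i)) ⊆ univ.image (update x i z) := by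
    intro v hv
    rcases mem_insert.1 hv with rfl | hv
    · exact mem_image.2 ⟨i, mem_univ _, by simp⟩
    · obtain ⟨hne, hv⟩ := mem_erase.1 hv
      obtain ⟨j, -, rfl⟩ := mem_image.1 hv
      have hj : j ≠ i := fun e => hne (e ▸ rfl)
      exact mem_image.2 ⟨j, mem_univ _, by simp [update_of_ne hj]⟩
  have hm : 1 ≤ (univ.image x).card := card_pos.2 ⟨_, hxi⟩
  have h2 := card_le_card hsub
  rw [card_insert_of_notMem hz, card_erase_of_mem hxi] at h2
  omega

lemma bad_ne (x : Fin n → X) (i : Fin n) (z : X)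
    (h : (univ.image (update x i z)).card < (univ.image x).card) {j : Fin n}
    (hj : j ≠ i) : x j ≠ x i := by
  intro he
  have hsub : univ.image x ⊆ univ.image (update x i z) := by
    intro v hv
    obtain ⟨k, -, rfl⟩ := mem_image.1 hv
    by_cases hk : k = i
    · subst hk
      exact mem_image.2 ⟨j, mem_univ _, by rw [update_of_ne hj, he]⟩
    · exact mem_image.2 ⟨k, mem_univ _, by simp [update_of_ne hk]⟩
  exact absurd (card_le_card hsub) (not_le.2 h)

lemma strong_ineq (hn : 2 ≤ n) (x : Fin n → X) (z : X) :
    ((n : ℝ) - 1) * (((univ.image x).card : ℝ) - 1)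
      ≤ ∑ i, (((univ.image (update x i z)).card : ℝ) - 1) := by
  classical
  set m := (univ.image x).card with hmdef
  have hm1 : 1 ≤ m := card_pos.2 ⟨x ⟨0, by omega⟩, mem_image.2 ⟨_, mem_univ _, rfl⟩⟩
  set p : Fin n → Prop := fun i => (univ.image (update x i z)).card < m with hp
  set B : Finset (Fin n) := univ.filter p with hB
  -- bad set is small
  have hBcard : (B.card : ℝ) ≤ (m : ℝ) - 1 := by
    rcases B.eq_empty_or_nonempty with he | ⟨i0, hi0⟩
    · rw [he]
      have : (1 : ℝ) ≤ (m : ℝ) := by exact_mod_cast hm1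
      simp; linarith
    · have hi0' : p i0 := (mem_filter.1 hi0).2
      have hz : z ∈ univ.image x := (mem_erase.1 (bad_mem x i0 z hi0')).2
      have hinj : Set.InjOn x B := by
        intro i hi j hj hij
        by_contra hne
        exact bad_ne x j z (mem_filter.1 hj).2 hne hij
      have hmaps : ∀ i ∈ B, x i ∈ (univ.image x).erase z := by
        intro i hi
        have hzi := bad_mem x i z (mem_filter.1 hi).2
        exact mem_erase.2 ⟨fun e => (mem_erase.1 hzi).1 e.symm,
          mem_image.2 ⟨i, mem_univ _, rfl⟩⟩
      have hcard := card_le_card_of_injOn x hmaps hinj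
      rw [card_erase_of_mem hz] at hcard
      have : B.card ≤ m - 1 := hcard
      have h3 : (B.card : ℝ) ≤ ((m - 1 : ℕ) : ℝ) := Nat.cast_le.2 this
      push_cast [Nat.cast_sub hm1] at h3
      linarith
  -- sum splitting
  have hsplit := Finset.sum_filter_add_sum_filter_not univ p
    (fun i => (((univ.image (update x i z)).card : ℝ) - 1))
  have hcardsplit : B.card + (univ.filter (fun i => ¬ p i)).card = n := by
    rw [hB, Finset.card_filter_add_card_filter_not]
    simp
  have h1 : (B.card : ℝ) * ((m : ℝ) - 2)
      ≤ ∑ i ∈ B, (((univ.image (update x i z)).card : ℝ) - 1) := by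
    have := Finset.sum_le_sum (f := fun _ : Fin n => (m : ℝ) - 2)
      (g := fun i => (((univ.image (update x i z)).card : ℝ) - 1)) (s := B)
      (fun i _ => by
        have hle := card_le_update x i z
        have : ((univ.image x).card : ℝ) ≤ ((univ.image (update x i z)).card : ℝ) + 1 := by
          exact_mod_cast hle
        rw [← hmdef] at this
        linarith)
    rw [Finset.sum_const, nsmul_eq_mul] at this
    exact this
  have h2 : ((n : ℝ) - B.card) * ((m : ℝ) - 1)
      ≤ ∑ i ∈ univ.filter (fun i => ¬ p i), (((univ.image (update x i z)).card : ℝ) - 1) := by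
    have := Finset.sum_le_sum (f := fun _ : Fin n => (m : ℝ) - 1)
      (g := fun i => (((univ.image (update x i z)).card : ℝ) - 1))
      (s := univ.filter (fun i => ¬ p i))
      (fun i hi => by
        have hle : m ≤ (univ.image (update x i z)).card := not_lt.1 (mem_filter.1 hi).2
        have : (m : ℝ) ≤ ((univ.image (update x i z)).card : ℝ) := by exact_mod_cast hle
        linarith)
    have hc : ((univ.filter (fun i => ¬ p i)).card : ℝ) = (n : ℝ) - B.card := by
      have := hcardsplit
      have h4 : ((B.card + (univ.filter (fun i => ¬ p i)).card : ℕ) : ℝ) = (n : ℝ) := by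
        exact_mod_cast congrArg (Nat.cast : ℕ → ℝ) this
      push_cast at h4
      linarith
    rw [Finset.sum_const, nsmul_eq_mul, hc] at this
    exact this
  have hmR : (1 : ℝ) ≤ (m : ℝ) := by exact_mod_cast hm1
  rw [← hsplit]
  have hBn : ∑ i ∈ filter (fun i => p i) univ, (((univ.image (update x i z)).card : ℝ) - 1)
      = ∑ i ∈ B, (((univ.image (update x i z)).card : ℝ) - 1) := rfl
  rw [hBn]
  nlinarith [hBcard, h1, h2, hmR]

lemma one_le_card_image (hn : 2 ≤ n) (x : Fin n → X) : 1 ≤ (univ.image x).card :=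
  card_pos.2 ⟨x ⟨0, by omega⟩, mem_image.2 ⟨_, mem_univ _, rfl⟩⟩

end CardAux

/-- The cardinality based map is a standard $n$-distance, with the constant attained when
$x_1 ≠ x_2 = ⋯ = x_n = z$. -/
theorem cardinality_isStandardNDistance {X : Type*} [DecidableEq X] {n : ℕ} (hn : 2 ≤ n)
    (hX : ∃ a b : X, a ≠ b) (d : (Fin n → X) → ℝ)
    (hdef : d = fun x => ((Finset.univ.image x).card : ℝ) - 1) :
    IsNDistance d ∧
    (∀ (x : Fin n → X) (z : X),
      d x ≤ (1 / ((n : ℝ) - 1)) * ∑ i, d (Function.update x i z)) ∧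
    (∀ a b : X, a ≠ b →
      d (fun i : Fin n => if (i : ℕ) = 0 then a else b) =
        (1 / ((n : ℝ) - 1)) *
          ∑ i, d (Function.update (fun i : Fin n => if (i : ℕ) = 0 then a else b) i b)) := by
  subst hdef
  have hnpos : (0 : ℝ) < (n : ℝ) - 1 := by
    have : (2 : ℝ) ≤ (n : ℝ) := by exact_mod_cast hn
    linarith
  have hnonneg : ∀ x : Fin n → X, (0 : ℝ) ≤ ((univ.image x).card : ℝ) - 1 := by
    intro x
    have := one_le_card_image hn x
    have : (1 : ℝ) ≤ ((univ.image x).card : ℝ) := by exact_mod_cast this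
    linarith
  have hmain : ∀ (x : Fin n → X) (z : X),
      (((univ.image x).card : ℝ) - 1)
        ≤ (1 / ((n : ℝ) - 1)) * ∑ i, (((univ.image (update x i z)).card : ℝ) - 1) := by
    intro x z
    rw [one_div, inv_mul_eq_div, le_div_iff₀ hnpos, mul_comm]
    exact strong_ineq hn x z
  refine ⟨⟨hnonneg, ?_, ?_, ?_⟩, hmain, ?_⟩
  · -- eq_zero_iff
    intro x
    constructor
    · intro h i j
      have hcard : (univ.image x).card = 1 := by
        have : ((univ.image x).card : ℝ) = 1 := by linarith [h]
        exact_mod_cast this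
      obtain ⟨a, ha⟩ := card_eq_one.1 hcard
      have hi : x i ∈ univ.image x := mem_image.2 ⟨i, mem_univ _, rfl⟩
      have hj : x j ∈ univ.image x := mem_image.2 ⟨j, mem_univ _, rfl⟩
      rw [ha, mem_singleton] at hi hj
      rw [hi, hj]
    · intro h
      have : univ.image x = {x ⟨0, by omega⟩} := by
        apply Finset.Subset.antisymm
        · intro v hv
          obtain ⟨j, -, rfl⟩ := mem_image.1 hv
          exact mem_singleton.2 (h j _)
        · intro v hv
          rw [mem_singleton] at hv
          exact hv ▸ mem_image.2 ⟨_, mem_univ _, rfl⟩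
      rw [this, card_singleton]
      norm_num
  · -- symm
    intro x σ
    have : univ.image (x ∘ σ) = univ.image x := by
      rw [← Finset.image_image]
      congr 1
      exact Finset.image_univ_equiv σ
    rw [this]
  · -- simplex
    intro x z
    have h1 := hmain x z
    have hsum : (0 : ℝ) ≤ ∑ i, (((univ.image (update x i z)).card : ℝ) - 1) :=
      Finset.sum_nonneg fun i _ => hnonneg _
    have hfac : (1 / ((n : ℝ) - 1)) * ∑ i, (((univ.image (update x i z)).card : ℝ) - 1)
        ≤ ∑ i, (((univ.image (update x i z)).card : ℝ) - 1) := by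
      have h2 : 1 / ((n : ℝ) - 1) ≤ 1 := by
        rw [div_le_one hnpos]
        have : (2 : ℝ) ≤ (n : ℝ) := by exact_mod_cast hn
        linarith
      nlinarith
    exact le_trans h1 hfac
  · -- equality case
    intro a b hab
    set i0 : Fin n := ⟨0, by omega⟩ with hi0
    set x : Fin n → X := fun i : Fin n => if (i : ℕ) = 0 then a else b with hx
    have hxi0 : x i0 = a := by simp [hx, hi0]
    have hxne : ∀ i : Fin n, i ≠ i0 → x i = b := by
      intro i hi
      have : (i : ℕ) ≠ 0 := fun h => hi (Fin.ext h)
      simp [hx, this]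
    have himg : univ.image x = {a, b} := by
      apply Finset.Subset.antisymm
      · intro v hv
        obtain ⟨j, -, rfl⟩ := mem_image.1 hv
        by_cases hj : j = i0
        · subst hj; rw [hxi0]; exact mem_insert_self _ _
        · rw [hxne j hj]; exact mem_insert_of_mem (mem_singleton_self _)
      · intro v hv
        rcases mem_insert.1 hv with rfl | hv
        · exact mem_image.2 ⟨i0, mem_univ _, hxi0⟩
        · rw [mem_singleton] at hv
          subst hv
          exact mem_image.2 ⟨⟨1, by omega⟩, mem_univ _,
            hxne _ (by simp [hi0, Fin.ext_iff])⟩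
    have hcardx : ((univ.image x).card : ℝ) = 2 := by
      rw [himg, card_insert_of_notMem (by simpa using hab), card_singleton]
      norm_num
    -- value of each term
    have hterm : ∀ i : Fin n, (((univ.image (update x i b)).card : ℝ) - 1)
        = if i = i0 then 0 else 1 := by
      intro i
      by_cases hi : i = i0
      · subst hi
        have hupd : update x i0 b = fun _ => b := by
          funext j
          by_cases hj : j = i0
          · subst hj; simp
          · rw [update_of_ne hj, hxne j hj]
        rw [hupd]
        have : univ.image (fun _ : Fin n => b) = {b} :=
          Finset.image_const ⟨i0, mem_univ _⟩ b
        rw [this, card_singleton]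
        simp
      · have hupd : update x i b = x := by
          rw [← hxne i hi]
          exact update_eq_self i x
        rw [hupd, hcardx]
        simp [hi]
        norm_num
    have hsum : ∑ i, (((univ.image (update x i b)).card : ℝ) - 1) = (n : ℝ) - 1 := by
      rw [Finset.sum_congr rfl (fun i _ => hterm i)]
      rw [Finset.sum_ite, Finset.sum_const_zero, Finset.sum_const, zero_add,
        nsmul_eq_mul, mul_one]
      have he : univ.filter (fun i => ¬ i = i0) = univ.erase i0 := by
        ext j; simp [and_comm]
      rw [he, card_erase_of_mem (mem_univ _), card_univ, Fintype.card_fin]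
      push_cast [Nat.cast_sub (by omega : 1 ≤ n)]
      ring
    show ((univ.image x).card : ℝ) - 1
        = 1 / ((n : ℝ) - 1) * ∑ i, (((univ.image (update x i b)).card : ℝ) - 1)
    rw [hsum, hcardx]
    field_simp
    norm_num
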